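/- Let Z₁, Z₂ ∈ 𝕊ⁿ satisfy Z_i(A + B₂K_i) + (A + B₂K_i)ᵀZ_i + Σ_l (C_l + D_{l,2}K_i)ᵀZ_i(C_l + D_{l,2}K_i) + M + K_iᵀRK_i = 0 for i = 1, 2, where K₂ = −(R + Σ_l D_{l,2}ᵀZ₁D_{l,2})⁻¹(B₂ᵀZ₁ + Σ_l D_{l,2}ᵀZ₁C_l), and suppose R + Σ_l D_{l,2}ᵀZ₁D_{l,2} ⪰ 0 and the system (A + B₂K₂, C₁ + D_{1,2}K₂, …, C_r + D_{r,2}K₂) is mean-square stable. Then Δ := Z₂ − Z₁ satisfies Δ(A + B₂K₂) + (A + B₂K₂)ᵀΔ + Σ_l (C_l + D_{l,2}K₂)ᵀΔ(C_l + D_{l,2}K₂) = (K₁ − K₂)ᵀ(R + Σ_l D_{l,2}ᵀZ₁D_{l,2})(K₁ − K₂) ⪰ 0, and consequently Z₂ ⪯ Z₁. -/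

import Mathlib

open Matrix

/-- Mean-square stability via the stochastic Lyapunov criterion (equivalent to
`E[X(t)ᵀX(t)] → 0` for the system `dX = AXdt + Σ_l C_lXdw_l`). -/
def MeanSquareStable {n : ℕ} (r : ℕ) (A : Matrix (Fin n) (Fin n) ℝ)
    (C : Fin r → Matrix (Fin n) (Fin n) ℝ) : Prop :=
  ∃ Z : Matrix (Fin n) (Fin n) ℝ, Z.PosDef ∧
    (-(Z * A + Aᵀ * Z + ∑ l, (C l)ᵀ * Z * C l)).PosDef


lemma real_conjTranspose {m n : Type*} (B : Matrix m n ℝ) : Bᴴ = Bᵀ := by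
  ext i j; simp [conjTranspose_apply]

lemma quadform_continuous {n : ℕ} (M : Matrix (Fin n) (Fin n) ℝ) :
    Continuous fun x : Fin n → ℝ => x ⬝ᵥ M *ᵥ x := by
  simp only [dotProduct, mulVec]
  exact continuous_finset_sum _ fun i _ =>
    (continuous_apply i).mul (continuous_finset_sum _ fun j _ =>
      (continuous_const.mul (continuous_apply j)))

lemma quadform_smul {n : ℕ} (M : Matrix (Fin n) (Fin n) ℝ) (c : ℝ) (x : Fin n → ℝ) :
    (c • x) ⬝ᵥ M *ᵥ (c • x) = c ^ 2 * (x ⬝ᵥ M *ᵥ x) := by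
  rw [mulVec_smul, dotProduct_smul, smul_dotProduct]
  simp [smul_eq_mul]; ring

lemma expand_sum {n m₂ r : ℕ} (C : Fin r → Matrix (Fin n) (Fin n) ℝ)
    (D : Fin r → Matrix (Fin n) (Fin m₂) ℝ) (Z : Matrix (Fin n) (Fin n) ℝ)
    (K : Matrix (Fin m₂) (Fin n) ℝ) :
    ∑ l, (C l + D l * K)ᵀ * Z * (C l + D l * K)
      = (∑ l, (C l)ᵀ * Z * C l) + (∑ l, (C l)ᵀ * Z * D l) * K
        + Kᵀ * (∑ l, (D l)ᵀ * Z * C l) + Kᵀ * (∑ l, (D l)ᵀ * Z * D l) * K := by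
  have h : ∀ l : Fin r, (C l + D l * K)ᵀ * Z * (C l + D l * K)
      = (C l)ᵀ * Z * C l + ((C l)ᵀ * Z * D l) * K
        + Kᵀ * ((D l)ᵀ * Z * C l) + Kᵀ * ((D l)ᵀ * Z * D l) * K := fun l => by
    simp only [transpose_add, transpose_mul, Matrix.mul_add, Matrix.add_mul, Matrix.mul_assoc]
    abel
  rw [Finset.sum_congr rfl fun l _ => h l]
  simp only [Finset.sum_add_distrib, Matrix.sum_mul, Matrix.mul_sum, Matrix.mul_assoc]


lemma dot_sum_mulVec {n : Type*} [Fintype n] {r : ℕ} (M : Fin r → Matrix n n ℝ) (x : n → ℝ) :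
    x ⬝ᵥ (∑ l, M l) *ᵥ x = ∑ l, x ⬝ᵥ (M l) *ᵥ x := by
  classical
  have h : ∀ s : Finset (Fin r), (∑ l ∈ s, M l) *ᵥ x = ∑ l ∈ s, M l *ᵥ x := by
    intro s
    induction s using Finset.induction_on with
    | empty => simp
    | insert a s ha ih => simp [Finset.sum_insert ha, add_mulVec, ih]
  rw [h]
  simp only [dotProduct, Finset.sum_apply, Finset.mul_sum]
  exact Finset.sum_comm

lemma lyap_psd {n r : ℕ} (Acl : Matrix (Fin n) (Fin n) ℝ)
    (Ccl : Fin r → Matrix (Fin n) (Fin n) ℝ)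
    (Δ : Matrix (Fin n) (Fin n) ℝ) (hΔh : Δ.IsHermitian)
    (W : Matrix (Fin n) (Fin n) ℝ) (hW : W.PosSemidef)
    (heq : Δ * Acl + Aclᵀ * Δ + ∑ l, (Ccl l)ᵀ * Δ * (Ccl l) = W)
    (hstab : MeanSquareStable r Acl Ccl) : (-Δ).PosSemidef := by
  obtain ⟨Z, hZ, hP⟩ := hstab
  refine PosSemidef.of_dotProduct_mulVec_nonneg hΔh.neg ?_
  by_contra hcon
  push_neg at hcon
  obtain ⟨v, hv⟩ := hcon
  have hvq : 0 < v ⬝ᵥ Δ *ᵥ v := by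
    simpa [neg_mulVec, dotProduct_neg] using hv
  have hvne : v ≠ 0 := by rintro rfl; simp at hvq
  set T : Set ℝ := {t | 0 ≤ t ∧ ∀ x, t * (x ⬝ᵥ Δ *ᵥ x) ≤ x ⬝ᵥ Z *ᵥ x} with hT
  have h0T : (0 : ℝ) ∈ T := ⟨le_refl 0, fun x => by simpa using hZ.posSemidef.dotProduct_mulVec_nonneg x⟩
  have hbdd : BddAbove T := by
    refine ⟨(v ⬝ᵥ Z *ᵥ v) / (v ⬝ᵥ Δ *ᵥ v), fun t ht => ?_⟩
    exact (le_div_iff₀ hvq).mpr (ht.2 v)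
  have hclosed : IsClosed T := by
    have : T = Set.Ici (0:ℝ) ∩ ⋂ x : Fin n → ℝ,
        {t : ℝ | t * (x ⬝ᵥ Δ *ᵥ x) ≤ x ⬝ᵥ Z *ᵥ x} := by
      ext t; simp [hT, Set.mem_iInter]
    rw [this]
    exact isClosed_Ici.inter (isClosed_iInter fun x =>
      isClosed_le (continuous_mul_right _) continuous_const)
  set t₀ := sSup T with ht₀
  have ht₀T : t₀ ∈ T := hclosed.csSup_mem ⟨0, h0T⟩ hbdd
  set Y := Z - t₀ • Δ with hY
  have hYq : ∀ x, x ⬝ᵥ Y *ᵥ x = x ⬝ᵥ Z *ᵥ x - t₀ * (x ⬝ᵥ Δ *ᵥ x) := fun x => by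
    simp [hY, sub_mulVec, smul_mulVec, dotProduct_sub, dotProduct_smul, smul_eq_mul]
  have hYsym : Y.IsHermitian := by
    refine hZ.isHermitian.sub ?_
    show (t₀ • Δ)ᴴ = t₀ • Δ
    rw [conjTranspose_smul, star_trivial, hΔh.eq]
  have hYpsd : Y.PosSemidef := by
    refine PosSemidef.of_dotProduct_mulVec_nonneg hYsym fun x => ?_
    have := ht₀T.2 x
    simp only [star_trivial]
    rw [hYq x]; linarith
  have hYnotpd : ¬ Y.PosDef := by
    intro hYpd
    obtain ⟨u, hu⟩ : ∃ u : Fin n → ℝ, u ∈ Metric.sphere (0 : Fin n → ℝ) 1 := by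
      refine ⟨‖v‖⁻¹ • v, ?_⟩
      have : ‖v‖ ≠ 0 := norm_ne_zero_iff.mpr hvne
      simp [mem_sphere_zero_iff_norm, norm_smul, abs_of_nonneg (inv_nonneg.mpr (norm_nonneg v)),
        inv_mul_cancel₀ this]
    obtain ⟨u₀, hu₀, hmin⟩ := (isCompact_sphere (0 : Fin n → ℝ) 1).exists_isMinOn ⟨u, hu⟩
      ((quadform_continuous Y).continuousOn)
    obtain ⟨u₁, hu₁, hmax⟩ := (isCompact_sphere (0 : Fin n → ℝ) 1).exists_isMaxOn ⟨u, hu⟩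
      ((quadform_continuous Δ).continuousOn)
    have hu₀ne : u₀ ≠ 0 := by
      intro h; rw [mem_sphere_zero_iff_norm, h] at hu₀; simp at hu₀
    have hc : 0 < u₀ ⬝ᵥ Y *ᵥ u₀ := by simpa using hYpd.dotProduct_mulVec_pos hu₀ne
    have hb : 0 < u₁ ⬝ᵥ Δ *ᵥ u₁ := by
      have hvu : (‖v‖⁻¹ • v) ⬝ᵥ Δ *ᵥ (‖v‖⁻¹ • v) = ‖v‖⁻¹ ^ 2 * (v ⬝ᵥ Δ *ᵥ v) :=
        quadform_smul Δ _ v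
      have h1 : 0 < (‖v‖⁻¹ • v) ⬝ᵥ Δ *ᵥ (‖v‖⁻¹ • v) := by
        rw [hvu]
        have : 0 < ‖v‖⁻¹ := inv_pos.mpr (norm_pos_iff.mpr hvne)
        positivity
      have hmem : (‖v‖⁻¹ • v) ∈ Metric.sphere (0 : Fin n → ℝ) 1 := by
        have : ‖v‖ ≠ 0 := norm_ne_zero_iff.mpr hvne
        simp [mem_sphere_zero_iff_norm, norm_smul, abs_of_nonneg (inv_nonneg.mpr (norm_nonneg v)),
          inv_mul_cancel₀ this]
      exact lt_of_lt_of_le h1 (hmax hmem)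
    set ε := (u₀ ⬝ᵥ Y *ᵥ u₀) / (u₁ ⬝ᵥ Δ *ᵥ u₁) with hε
    have hεpos : 0 < ε := div_pos hc hb
    have hmemT : t₀ + ε ∈ T := by
      refine ⟨by linarith [ht₀T.1], fun x => ?_⟩
      by_cases hx : x = 0
      · subst hx; simp
      · have hxn : (0:ℝ) < ‖x‖ := norm_pos_iff.mpr hx
        set u' := ‖x‖⁻¹ • x with hu'
        have hu'mem : u' ∈ Metric.sphere (0 : Fin n → ℝ) 1 := by
          simp [hu', mem_sphere_zero_iff_norm, norm_smul,
            abs_of_nonneg (inv_nonneg.mpr (norm_nonneg x)), inv_mul_cancel₀ hxn.ne']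
        have h1 : u₀ ⬝ᵥ Y *ᵥ u₀ ≤ u' ⬝ᵥ Y *ᵥ u' := hmin hu'mem
        have h2 : u' ⬝ᵥ Δ *ᵥ u' ≤ u₁ ⬝ᵥ Δ *ᵥ u₁ := hmax hu'mem
        have hkey : ε * (u' ⬝ᵥ Δ *ᵥ u') ≤ u' ⬝ᵥ Y *ᵥ u' := by
          rcases le_or_gt (u' ⬝ᵥ Δ *ᵥ u') 0 with h | h
          · nlinarith
          · have : ε * (u' ⬝ᵥ Δ *ᵥ u') ≤ ε * (u₁ ⬝ᵥ Δ *ᵥ u₁) :=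
              mul_le_mul_of_nonneg_left h2 hεpos.le
            have heb : ε * (u₁ ⬝ᵥ Δ *ᵥ u₁) = u₀ ⬝ᵥ Y *ᵥ u₀ := div_mul_cancel₀ _ hb.ne'
            linarith
        have hscale : (t₀ + ε) * (u' ⬝ᵥ Δ *ᵥ u') ≤ u' ⬝ᵥ Z *ᵥ u' := by
          have := hYq u'; nlinarith
        have hxu : x = ‖x‖ • u' := by
          rw [hu', smul_smul, mul_inv_cancel₀ hxn.ne', one_smul]
        have e1 : x ⬝ᵥ Δ *ᵥ x = ‖x‖ ^ 2 * (u' ⬝ᵥ Δ *ᵥ u') := by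
          conv_lhs => rw [hxu]
          exact quadform_smul Δ _ u'
        have e2 : x ⬝ᵥ Z *ᵥ x = ‖x‖ ^ 2 * (u' ⬝ᵥ Z *ᵥ u') := by
          conv_lhs => rw [hxu]
          exact quadform_smul Z _ u'
        rw [e1, e2]
        nlinarith [mul_le_mul_of_nonneg_left hscale (sq_nonneg ‖x‖)]
    have : t₀ + ε ≤ t₀ := le_csSup hbdd hmemT
    linarith
  obtain ⟨x₀, hx₀, hYx₀⟩ : ∃ x, x ≠ 0 ∧ Y *ᵥ x = 0 := by
    by_contra h
    push_neg at h
    refine hYnotpd (PosDef.of_dotProduct_mulVec_pos hYsym fun x hx => ?_)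
    refine lt_of_le_of_ne (hYpsd.dotProduct_mulVec_nonneg x) fun h0 => h x hx ?_
    exact (hYpsd.dotProduct_mulVec_zero_iff x).mp h0.symm
  -- final contradiction
  have hYT : Yᵀ = Y := by
    rw [← real_conjTranspose]; exact hYsym
  have h1 : x₀ ⬝ᵥ (Y * Acl) *ᵥ x₀ = 0 := by
    have hvm : x₀ ᵥ* Y = 0 := by rw [← hYT, vecMul_transpose, hYx₀]
    rw [← mulVec_mulVec, dotProduct_mulVec, hvm, zero_dotProduct]
  have h2 : x₀ ⬝ᵥ (Aclᵀ * Y) *ᵥ x₀ = 0 := by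
    rw [← mulVec_mulVec, hYx₀, mulVec_zero, dotProduct_zero]
  have h3 : ∀ l, 0 ≤ x₀ ⬝ᵥ ((Ccl l)ᵀ * Y * Ccl l) *ᵥ x₀ := fun l => by
    have := (hYpsd.conjTranspose_mul_mul_same (Ccl l)).dotProduct_mulVec_nonneg x₀
    rwa [real_conjTranspose, star_trivial] at this
  have h4 : 0 ≤ x₀ ⬝ᵥ W *ᵥ x₀ := by simpa using hW.dotProduct_mulVec_nonneg x₀
  have hmat : Z * Acl + Aclᵀ * Z + ∑ l, (Ccl l)ᵀ * Z * Ccl l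
      = (Y * Acl + Aclᵀ * Y + ∑ l, (Ccl l)ᵀ * Y * Ccl l) + t₀ • W := by
    rw [← heq, hY]
    simp only [Matrix.sub_mul, Matrix.mul_sub, Matrix.smul_mul, Matrix.mul_smul,
      smul_sub, smul_add, Finset.smul_sum, Finset.sum_sub_distrib]
    abel
  have hq : 0 ≤ x₀ ⬝ᵥ (Z * Acl + Aclᵀ * Z + ∑ l, (Ccl l)ᵀ * Z * Ccl l) *ᵥ x₀ := by
    rw [hmat]
    simp only [add_mulVec, dotProduct_add, smul_mulVec, dotProduct_smul, smul_eq_mul,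
      h1, h2, zero_add, add_zero]
    have hsum : 0 ≤ x₀ ⬝ᵥ (∑ l, (Ccl l)ᵀ * Y * Ccl l) *ᵥ x₀ := by
      rw [dot_sum_mulVec]
      exact Finset.sum_nonneg fun l _ => h3 l
    have := mul_nonneg ht₀T.1 h4
    linarith
  have := hP.dotProduct_mulVec_pos hx₀
  rw [star_trivial, neg_mulVec, dotProduct_neg] at this
  linarith

/-- monotonicity of the inner policy-iteration loop.  If `Z₁, Z₂`
solve the closed-loop Lyapunov equations for the gains `K₁, K₂` respectively,
where `K₂` is the improved gain computed from `Z₁`, `R + Σ D_lᵀZ₁D_l ⪰ 0`, and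
the closed-loop system under `K₂` is mean-square stable, then
`Δ = Z₂ − Z₁` solves the displayed Lyapunov equation with positive semidefinite
inhomogeneity, and `Z₂ ⪯ Z₁`. -/
theorem policy_iteration_monotone (n m₂ r : ℕ)
    (A : Matrix (Fin n) (Fin n) ℝ) (B₂ : Matrix (Fin n) (Fin m₂) ℝ)
    (C : Fin r → Matrix (Fin n) (Fin n) ℝ) (D : Fin r → Matrix (Fin n) (Fin m₂) ℝ)
    (M : Matrix (Fin n) (Fin n) ℝ) (hM : M.IsSymm)
    (R : Matrix (Fin m₂) (Fin m₂) ℝ) (hR : R.IsSymm)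
    (Z₁ Z₂ : Matrix (Fin n) (Fin n) ℝ) (hZ₁ : Z₁.IsSymm) (hZ₂ : Z₂.IsSymm)
    (K₁ K₂ : Matrix (Fin m₂) (Fin n) ℝ)
    (hinv : IsUnit (R + ∑ l, (D l)ᵀ * Z₁ * D l).det)
    (hK₂ : K₂ = -((R + ∑ l, (D l)ᵀ * Z₁ * D l)⁻¹
        * (B₂ᵀ * Z₁ + ∑ l, (D l)ᵀ * Z₁ * C l)))
    (hRZ : (R + ∑ l, (D l)ᵀ * Z₁ * D l).PosSemidef)
    (hstab : MeanSquareStable r (A + B₂ * K₂) (fun l => C l + D l * K₂))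
    (hlyap₁ : Z₁ * (A + B₂ * K₁) + (A + B₂ * K₁)ᵀ * Z₁
        + (∑ l, (C l + D l * K₁)ᵀ * Z₁ * (C l + D l * K₁)) + M + K₁ᵀ * R * K₁ = 0)
    (hlyap₂ : Z₂ * (A + B₂ * K₂) + (A + B₂ * K₂)ᵀ * Z₂
        + (∑ l, (C l + D l * K₂)ᵀ * Z₂ * (C l + D l * K₂)) + M + K₂ᵀ * R * K₂ = 0) :
    ((Z₂ - Z₁) * (A + B₂ * K₂) + (A + B₂ * K₂)ᵀ * (Z₂ - Z₁)
        + (∑ l, (C l + D l * K₂)ᵀ * (Z₂ - Z₁) * (C l + D l * K₂))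
      = (K₁ - K₂)ᵀ * (R + ∑ l, (D l)ᵀ * Z₁ * D l) * (K₁ - K₂)) ∧
    ((K₁ - K₂)ᵀ * (R + ∑ l, (D l)ᵀ * Z₁ * D l) * (K₁ - K₂)).PosSemidef ∧
    (Z₁ - Z₂).PosSemidef := by
  have hQt : (∑ l, (D l)ᵀ * Z₁ * D l)ᵀ = ∑ l, (D l)ᵀ * Z₁ * D l := by
    rw [transpose_sum]
    exact Finset.sum_congr rfl fun l _ => by
      simp [transpose_mul, Matrix.mul_assoc, hZ₁.eq]
  have hXt : (∑ l, (D l)ᵀ * Z₁ * C l)ᵀ = ∑ l, (C l)ᵀ * Z₁ * D l := by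
    rw [transpose_sum]
    exact Finset.sum_congr rfl fun l _ => by
      simp [transpose_mul, Matrix.mul_assoc, hZ₁.eq]
  -- abbreviations
  set Q := ∑ l, (D l)ᵀ * Z₁ * D l with hQdef
  set X := ∑ l, (C l)ᵀ * Z₁ * D l with hXdef
  set X' := ∑ l, (D l)ᵀ * Z₁ * C l with hX'def
  set T₂ := ∑ l, (C l + D l * K₂)ᵀ * Z₂ * (C l + D l * K₂) with hT₂def
  have hSK : (R + Q) * K₂ + (B₂ᵀ * Z₁ + X') = 0 := by
    rw [hK₂, Matrix.mul_neg, ← Matrix.mul_assoc, Matrix.mul_nonsing_inv _ hinv,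
      Matrix.one_mul, neg_add_cancel]
  have hKS : K₂ᵀ * (R + Q) + (Z₁ * B₂ + X) = 0 := by
    have h := congrArg Matrix.transpose hSK
    simpa [transpose_add, transpose_mul, transpose_neg, hR.eq, hQt, hXt, hZ₁.eq] using h
  rw [expand_sum C D Z₁ K₁] at hlyap₁
  have hsplit : ∑ l, (C l + D l * K₂)ᵀ * (Z₂ - Z₁) * (C l + D l * K₂)
      = T₂ - ((∑ l, (C l)ᵀ * Z₁ * C l) + X * K₂ + K₂ᵀ * X' + K₂ᵀ * Q * K₂) := by
    have h : ∀ l : Fin r, (C l + D l * K₂)ᵀ * (Z₂ - Z₁) * (C l + D l * K₂)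
        = (C l + D l * K₂)ᵀ * Z₂ * (C l + D l * K₂)
          - (C l + D l * K₂)ᵀ * Z₁ * (C l + D l * K₂) := fun l => by
      simp only [Matrix.mul_sub, Matrix.sub_mul]
    rw [Finset.sum_congr rfl fun l _ => h l, Finset.sum_sub_distrib, expand_sum C D Z₁ K₂, ← hT₂def,
      ← hXdef, ← hX'def, ← hQdef]
  have key : ((Z₂ - Z₁) * (A + B₂ * K₂) + (A + B₂ * K₂)ᵀ * (Z₂ - Z₁)
        + (T₂ - ((∑ l, (C l)ᵀ * Z₁ * C l) + X * K₂ + K₂ᵀ * X' + K₂ᵀ * Q * K₂)))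
        - (K₁ - K₂)ᵀ * (R + Q) * (K₁ - K₂)
      = (Z₂ * (A + B₂ * K₂) + (A + B₂ * K₂)ᵀ * Z₂ + T₂ + M + K₂ᵀ * R * K₂)
        - (Z₁ * (A + B₂ * K₁) + (A + B₂ * K₁)ᵀ * Z₁
          + ((∑ l, (C l)ᵀ * Z₁ * C l) + X * K₁ + K₁ᵀ * X' + K₁ᵀ * Q * K₁) + M + K₁ᵀ * R * K₁)
        + (K₂ᵀ * (R + Q) + (Z₁ * B₂ + X)) * K₁
        + K₁ᵀ * ((R + Q) * K₂ + (B₂ᵀ * Z₁ + X'))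
        - (K₂ᵀ * (R + Q) + (Z₁ * B₂ + X)) * K₂
        - K₂ᵀ * ((R + Q) * K₂ + (B₂ᵀ * Z₁ + X')) := by
    simp only [transpose_add, transpose_mul, transpose_sub, Matrix.mul_add, Matrix.add_mul,
      Matrix.mul_sub, Matrix.sub_mul, Matrix.mul_assoc]
    abel
  rw [hlyap₁, hlyap₂, hSK, hKS] at key
  simp only [Matrix.zero_mul, Matrix.mul_zero, sub_zero, add_zero, zero_sub, sub_self,
    neg_zero, zero_add] at key
  have part1 : (Z₂ - Z₁) * (A + B₂ * K₂) + (A + B₂ * K₂)ᵀ * (Z₂ - Z₁)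
      + (∑ l, (C l + D l * K₂)ᵀ * (Z₂ - Z₁) * (C l + D l * K₂))
      = (K₁ - K₂)ᵀ * (R + Q) * (K₁ - K₂) := by
    rw [hsplit]
    exact sub_eq_zero.mp key
  have part2 : ((K₁ - K₂)ᵀ * (R + Q) * (K₁ - K₂)).PosSemidef := by
    have := hRZ.conjTranspose_mul_mul_same (K₁ - K₂)
    rwa [real_conjTranspose] at this
  refine ⟨part1, part2, ?_⟩
  have hherm : (Z₂ - Z₁).IsHermitian := by
    show (Z₂ - Z₁)ᴴ = Z₂ - Z₁
    rw [real_conjTranspose, transpose_sub, hZ₁.eq, hZ₂.eq]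
  have := lyap_psd (A + B₂ * K₂) (fun l => C l + D l * K₂) (Z₂ - Z₁) hherm
    ((K₁ - K₂)ᵀ * (R + Q) * (K₁ - K₂)) part2 part1 hstab
  rwa [neg_sub] at this
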